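/- Let N ≥ 2 be an integer, θ > 0, σ > 0, α ∈ (0,1), β := 1 − α, and γ(k) := (σ²/(2θ))·e^{−(θ/N)·k}. Let X_1, …, X_N be square-integrable real random variables with E[X_t] = m*_t for real numbers m*_1, …, m*_N, Var(X_t) = σ²/(2θ), and Cov(X_t, X_s) = (σ²/(2θ))·e^{−(θ/N)|t−s|} for all t, s ∈ {1,…,N}. Define m̂_1 := X_1, m̂_t := (1−α)·m̂_{t−1} + α·X_t for t ∈ {2,…,N}, set D_t := E[(m̂_t − m*_t)²] and K_j := m*_j − m*_{j−1}. Then for every t ∈ {2,…,N}: D_t = β²·(D_{t−1} + K_t² + 2·K_t·∑_{j=2}^{t−1} β^{t−j}·K_j) + α²·σ²/(2θ) + 2·α·β^{t}·γ(t−1) + 2·α²·∑_{k=1}^{t−1} β^{k}·γ(k). -/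

import Mathlib

open MeasureTheory Real

private lemma int_mul2 {Ω : Type*} [MeasurableSpace Ω] {μ : Measure Ω}
    {f g : Ω → ℝ} (hf : MemLp f 2 μ) (hg : MemLp g 2 μ) :
    Integrable (fun ω => f ω * g ω) μ := by
  have h := hf.smul (r := 1) hg
    (hpqr := ⟨by rw [inv_one, ENNReal.inv_two_add_inv_two]⟩)
  have h2 : (fun ω => f ω * g ω) = g • f := by funext ω; simp [mul_comm]
  rw [h2]; exact memLp_one_iff_integrable.mp h

private lemma bias_id (α β : ℝ) (hab : α = 1 - β) (m : ℕ → ℝ) :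
    ∀ s : ℕ, 1 ≤ s →
      β ^ (s - 1) * m 1 + α * ∑ j ∈ Finset.Icc 2 s, β ^ (s - j) * m j - m s
        = -∑ j ∈ Finset.Icc 2 s, β ^ (s + 1 - j) * (m j - m (j - 1)) := by
  intro s hs
  induction s, hs using Nat.le_induction with
  | base => simp
  | succ s hs ih =>
    rw [Finset.sum_Icc_succ_top (by omega : 2 ≤ s + 1),
        Finset.sum_Icc_succ_top (by omega : 2 ≤ s + 1)]
    have e1 : ∑ j ∈ Finset.Icc 2 s, β ^ (s + 1 - j) * m j
        = β * ∑ j ∈ Finset.Icc 2 s, β ^ (s - j) * m j := by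
      rw [Finset.mul_sum]
      refine Finset.sum_congr rfl fun j hj => ?_
      have hj' : j ≤ s := (Finset.mem_Icc.mp hj).2
      rw [show s + 1 - j = (s - j) + 1 by omega, pow_succ]; ring
    have e2 : ∑ j ∈ Finset.Icc 2 s, β ^ (s + 1 + 1 - j) * (m j - m (j - 1))
        = β * ∑ j ∈ Finset.Icc 2 s, β ^ (s + 1 - j) * (m j - m (j - 1)) := by
      rw [Finset.mul_sum]
      refine Finset.sum_congr rfl fun j hj => ?_
      have hj' : j ≤ s := (Finset.mem_Icc.mp hj).2
      rw [show s + 1 + 1 - j = (s + 1 - j) + 1 by omega, pow_succ]; ring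
    have e3 : β ^ (s + 1 - 1) = β * β ^ (s - 1) := by
      rw [show s + 1 - 1 = (s - 1) + 1 by omega, pow_succ]; ring
    rw [e1, e2, e3, show s + 1 - (s + 1) = 0 by omega,
        show s + 1 + 1 - (s + 1) = 1 by omega, pow_zero, pow_one,
        show s + 1 - 1 = s from rfl]
    linear_combination β * ih + (m (s + 1)) * hab

private lemma reindex_sum (f : ℕ → ℝ) (s : ℕ) (hs : 1 ≤ s) :
    ∑ j ∈ Finset.Icc 2 s, f (s + 1 - j) = ∑ k ∈ Finset.Icc 1 (s - 1), f k := by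
  refine Finset.sum_nbij' (fun j => s + 1 - j) (fun k => s + 1 - k) ?_ ?_ ?_ ?_ ?_ <;>
    intros a ha <;> simp only [Finset.mem_Icc] at * <;> omega

/-- Exact recursion for the mean square error `D_t = E[(m̂_t − m*_t)²]` of the
exponential smoothing estimator applied to correlated observations with
time-varying means. -/
theorem mse_recursion
    {Ω : Type*} [MeasurableSpace Ω] (μ : Measure Ω) [IsProbabilityMeasure μ]
    (N : ℕ) (hN : 2 ≤ N) (θ σ α β : ℝ) (hθ : 0 < θ) (hσ : 0 < σ)
    (hα : α ∈ Set.Ioo (0 : ℝ) 1) (hβ : β = 1 - α)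
    (γ : ℕ → ℝ) (hγ : ∀ k, γ k = σ ^ 2 / (2 * θ) * Real.exp (-(θ / N) * (k : ℝ)))
    (X : ℕ → Ω → ℝ) (m : ℕ → ℝ)
    (hL2 : ∀ t, 1 ≤ t → t ≤ N → MemLp (X t) 2 μ)
    (hmean : ∀ t, 1 ≤ t → t ≤ N → ∫ ω, X t ω ∂μ = m t)
    (hcov : ∀ t s, 1 ≤ t → t ≤ N → 1 ≤ s → s ≤ N →
      ∫ ω, (X t ω - m t) * (X s ω - m s) ∂μ
        = σ ^ 2 / (2 * θ) * Real.exp (-(θ / N) * |(t : ℝ) - (s : ℝ)|))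
    (mhat : ℕ → Ω → ℝ)
    (hm1 : ∀ ω, mhat 1 ω = X 1 ω)
    (hmt : ∀ t, 2 ≤ t → t ≤ N → ∀ ω,
      mhat t ω = (1 - α) * mhat (t - 1) ω + α * X t ω) :
    ∀ t, 2 ≤ t → t ≤ N →
      ∫ ω, (mhat t ω - m t) ^ 2 ∂μ
        = β ^ 2 * ((∫ ω, (mhat (t - 1) ω - m (t - 1)) ^ 2 ∂μ)
              + (m t - m (t - 1)) ^ 2
              + 2 * (m t - m (t - 1))
                * ∑ j ∈ Finset.Icc 2 (t - 1), β ^ (t - j) * (m j - m (j - 1)))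
          + α ^ 2 * σ ^ 2 / (2 * θ)
          + 2 * α * β ^ t * γ (t - 1)
          + 2 * α ^ 2 * ∑ k ∈ Finset.Icc 1 (t - 1), β ^ k * γ k := by
  subst hβ
  intro t ht htN
  obtain ⟨s, rfl⟩ : ∃ s, t = s + 1 := ⟨t - 1, by omega⟩
  have hs1 : 1 ≤ s := by omega
  have hsN : s ≤ N := by omega
  have hsN' : s + 1 ≤ N := htN
  simp only [Nat.add_sub_cancel]
  set β := 1 - α with hb'
  -- centered variables
  set Z : ℕ → Ω → ℝ := fun j ω => X j ω - m j with hZdef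
  have hZL2 : ∀ j, 1 ≤ j → j ≤ N → MemLp (Z j) 2 μ := fun j h1 h2 =>
    (hL2 j h1 h2).sub (memLp_const _)
  have hZint : ∀ j, 1 ≤ j → j ≤ N → Integrable (Z j) μ := fun j h1 h2 =>
    (hZL2 j h1 h2).integrable one_le_two
  have hZ0 : ∀ j, 1 ≤ j → j ≤ N → ∫ ω, Z j ω ∂μ = 0 := by
    intro j h1 h2
    have hXi : Integrable (X j) μ := (hL2 j h1 h2).integrable one_le_two
    simp only [hZdef]
    rw [integral_sub hXi (integrable_const _), hmean j h1 h2, integral_const]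
    simp
  have hZZ : ∀ i j, 1 ≤ i → i ≤ N → i ≤ j → j ≤ N →
      ∫ ω, Z i ω * Z j ω ∂μ = γ (j - i) := by
    intro i j hi1 hiN hij hjN
    have h := hcov i j hi1 hiN (le_trans hi1 hij) hjN
    have hcast : |(i : ℝ) - (j : ℝ)| = ((j - i : ℕ) : ℝ) := by
      rw [abs_sub_comm, abs_of_nonneg (sub_nonneg.mpr (by exact_mod_cast hij)),
        Nat.cast_sub hij]
    rw [hγ, ← hcast, ← h]
  -- mhat is in L2
  have hmL2 : ∀ u, 1 ≤ u → u ≤ N → MemLp (mhat u) 2 μ := by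
    intro u hu
    induction u, hu using Nat.le_induction with
    | base =>
      intro _
      have h1 : mhat 1 = X 1 := funext hm1
      rw [h1]; exact hL2 1 le_rfl (by omega)
    | succ u hu ih =>
      intro huN
      have h1 : mhat (u + 1) = fun ω => (1 - α) * mhat u ω + α * X (u + 1) ω :=
        funext fun ω => by simpa using hmt (u + 1) (by omega) huN ω
      rw [h1]
      exact ((ih (by omega)).const_mul _).add ((hL2 (u + 1) (by omega) huN).const_mul _)
  -- representation of mhat as geometric combination
  have rep : ∀ u, 1 ≤ u → u ≤ N → ∀ ω,
      mhat u ω = β ^ (u - 1) * X 1 ω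
        + α * ∑ j ∈ Finset.Icc 2 u, β ^ (u - j) * X j ω := by
    intro u hu
    induction u, hu using Nat.le_induction with
    | base =>
      intro _ ω
      have he : Finset.Icc 2 1 = (∅ : Finset ℕ) := rfl
      simp [hm1 ω, he]
    | succ u hu ih =>
      intro huN ω
      have hmu : mhat (u + 1) ω = (1 - α) * mhat u ω + α * X (u + 1) ω := by
        simpa using hmt (u + 1) (by omega) huN ω
      rw [hmu, ih (by omega) ω, Finset.sum_Icc_succ_top (by omega : 2 ≤ u + 1)]
      have e1 : ∑ j ∈ Finset.Icc 2 u, β ^ (u + 1 - j) * X j ω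
          = β * ∑ j ∈ Finset.Icc 2 u, β ^ (u - j) * X j ω := by
        rw [Finset.mul_sum]
        refine Finset.sum_congr rfl fun j hj => ?_
        have hj' : j ≤ u := (Finset.mem_Icc.mp hj).2
        rw [show u + 1 - j = (u - j) + 1 by omega, pow_succ]; ring
      have e3 : β ^ (u + 1 - 1) = β * β ^ (u - 1) := by
        rw [show u + 1 - 1 = (u - 1) + 1 by omega, pow_succ]; ring
      rw [e1, e3, show u + 1 - (u + 1) = 0 by omega, pow_zero, ← hb']
      ring
  -- the previous error A and its decomposition
  set A : Ω → ℝ := fun ω => mhat s ω - m s with hAdef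
  have hAL2 : MemLp A 2 μ := (hmL2 s hs1 hsN).sub (memLp_const _)
  have hAint : Integrable A μ := hAL2.integrable one_le_two
  set b : ℝ := β ^ (s - 1) * m 1 + α * ∑ j ∈ Finset.Icc 2 s, β ^ (s - j) * m j - m s
    with hbdef
  have hArep : ∀ ω, A ω = β ^ (s - 1) * Z 1 ω
      + α * ∑ j ∈ Finset.Icc 2 s, β ^ (s - j) * Z j ω + b := by
    intro ω
    have hsum : ∑ j ∈ Finset.Icc 2 s, β ^ (s - j) * Z j ω
        = ∑ j ∈ Finset.Icc 2 s, β ^ (s - j) * X j ω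
          - ∑ j ∈ Finset.Icc 2 s, β ^ (s - j) * m j := by
      rw [← Finset.sum_sub_distrib]
      refine Finset.sum_congr rfl fun j hj => ?_
      simp only [hZdef]; ring
    simp only [hAdef, hbdef, hZdef, rep s hs1 hsN ω]
    simp only [hZdef] at hsum
    linear_combination (-α) * hsum
  -- expectation of A
  have hbias : ∫ ω, A ω ∂μ
      = -∑ j ∈ Finset.Icc 2 s, β ^ (s + 1 - j) * (m j - m (j - 1)) := by
    have i1 : Integrable (fun ω => β ^ (s - 1) * Z 1 ω) μ :=
      (hZint 1 le_rfl (by omega)).const_mul _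
    have iterm : ∀ j ∈ Finset.Icc 2 s, Integrable (fun ω => β ^ (s - j) * Z j ω) μ := by
      intro j hj
      obtain ⟨hj1, hj2⟩ := Finset.mem_Icc.mp hj
      exact (hZint j (by omega) (by omega)).const_mul _
    have i2 : Integrable
        (fun ω => α * ∑ j ∈ Finset.Icc 2 s, β ^ (s - j) * Z j ω) μ :=
      (integrable_finset_sum _ iterm).const_mul _
    have i12 : Integrable (fun ω => β ^ (s - 1) * Z 1 ω
        + α * ∑ j ∈ Finset.Icc 2 s, β ^ (s - j) * Z j ω) μ := i1.add i2
    have : ∫ ω, A ω ∂μ = ∫ ω, (β ^ (s - 1) * Z 1 ω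
        + α * ∑ j ∈ Finset.Icc 2 s, β ^ (s - j) * Z j ω + b) ∂μ :=
      integral_congr_ae (Filter.Eventually.of_forall hArep)
    rw [this, integral_add i12 (integrable_const b),
        integral_add i1 i2, integral_const_mul, integral_const_mul,
        integral_finset_sum _ iterm,
        hZ0 1 le_rfl (by omega), integral_const]
    have hz : ∑ j ∈ Finset.Icc 2 s, ∫ ω, β ^ (s - j) * Z j ω ∂μ = 0 := by
      refine Finset.sum_eq_zero fun j hj => ?_
      obtain ⟨hj1, hj2⟩ := Finset.mem_Icc.mp hj
      rw [integral_const_mul, hZ0 j (by omega) (by omega)]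
      ring
    rw [hz]
    simp only [probReal_univ, ENNReal.toReal_one, one_smul, mul_zero, zero_add, add_zero]
    rw [hbdef]
    exact bias_id α β (by rw [hb']; ring) m s hs1
  -- covariance of A with Z (s+1)
  have hZt2 : MemLp (Z (s + 1)) 2 μ := hZL2 (s + 1) (by omega) hsN'
  have hcovI : ∫ ω, A ω * Z (s + 1) ω ∂μ
      = β ^ (s - 1) * γ s + α * ∑ j ∈ Finset.Icc 2 s, β ^ (s - j) * γ (s + 1 - j) := by
    have hpt : ∀ ω, A ω * Z (s + 1) ω
        = β ^ (s - 1) * (Z 1 ω * Z (s + 1) ω)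
          + α * ∑ j ∈ Finset.Icc 2 s, β ^ (s - j) * (Z j ω * Z (s + 1) ω)
          + b * Z (s + 1) ω := by
      intro ω
      have hsm : (∑ j ∈ Finset.Icc 2 s, β ^ (s - j) * Z j ω) * Z (s + 1) ω
          = ∑ j ∈ Finset.Icc 2 s, β ^ (s - j) * (Z j ω * Z (s + 1) ω) := by
        rw [Finset.sum_mul]
        exact Finset.sum_congr rfl fun j _ => mul_assoc _ _ _
      rw [hArep ω]
      linear_combination α * hsm
    have i1 : Integrable (fun ω => β ^ (s - 1) * (Z 1 ω * Z (s + 1) ω)) μ :=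
      (int_mul2 (hZL2 1 le_rfl (by omega)) hZt2).const_mul _
    have iterm : ∀ j ∈ Finset.Icc 2 s,
        Integrable (fun ω => β ^ (s - j) * (Z j ω * Z (s + 1) ω)) μ := by
      intro j hj
      obtain ⟨hj1, hj2⟩ := Finset.mem_Icc.mp hj
      exact (int_mul2 (hZL2 j (by omega) (by omega)) hZt2).const_mul _
    have i2 : Integrable (fun ω =>
        α * ∑ j ∈ Finset.Icc 2 s, β ^ (s - j) * (Z j ω * Z (s + 1) ω)) μ :=
      (integrable_finset_sum _ iterm).const_mul _
    have i12 : Integrable (fun ω => β ^ (s - 1) * (Z 1 ω * Z (s + 1) ω)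
        + α * ∑ j ∈ Finset.Icc 2 s, β ^ (s - j) * (Z j ω * Z (s + 1) ω)) μ := i1.add i2
    have i3 : Integrable (fun ω => b * Z (s + 1) ω) μ :=
      (hZint (s + 1) (by omega) hsN').const_mul _
    have : ∫ ω, A ω * Z (s + 1) ω ∂μ
        = ∫ ω, (β ^ (s - 1) * (Z 1 ω * Z (s + 1) ω)
          + α * ∑ j ∈ Finset.Icc 2 s, β ^ (s - j) * (Z j ω * Z (s + 1) ω)
          + b * Z (s + 1) ω) ∂μ :=
      integral_congr_ae (Filter.Eventually.of_forall hpt)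
    rw [this, integral_add i12 i3, integral_add i1 i2,
        integral_const_mul, integral_const_mul, integral_const_mul,
        integral_finset_sum _ iterm,
        hZZ 1 (s + 1) le_rfl (by omega) (by omega) hsN',
        hZ0 (s + 1) (by omega) hsN']
    have hz : ∑ j ∈ Finset.Icc 2 s, ∫ ω, β ^ (s - j) * (Z j ω * Z (s + 1) ω) ∂μ
        = ∑ j ∈ Finset.Icc 2 s, β ^ (s - j) * γ (s + 1 - j) := by
      refine Finset.sum_congr rfl fun j hj => ?_
      have hj2 : 2 ≤ j := (Finset.mem_Icc.mp hj).1
      have hjs : j ≤ s := (Finset.mem_Icc.mp hj).2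
      rw [integral_const_mul,
        hZZ j (s + 1) (by omega) (by omega) (by omega) hsN']
    rw [hz, show s + 1 - 1 = s from rfl]
    ring
  -- variance of Z (s+1)
  have hvar : ∫ ω, Z (s + 1) ω ^ 2 ∂μ = σ ^ 2 / (2 * θ) := by
    have h1 : (fun ω => Z (s + 1) ω ^ 2) = fun ω => Z (s + 1) ω * Z (s + 1) ω :=
      funext fun ω => pow_two _
    rw [h1, hZZ (s + 1) (s + 1) (by omega) hsN' le_rfl hsN', hγ]
    simp
  -- decomposition of the new error
  set K : ℝ := m (s + 1) - m s with hKdef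
  have hdec : ∀ ω, mhat (s + 1) ω - m (s + 1)
      = β * A ω + α * Z (s + 1) ω - β * K := by
    intro ω
    have h1 := hmt (s + 1) (by omega) hsN' ω
    simp only [Nat.add_sub_cancel] at h1
    simp only [hAdef, hZdef, hKdef, hb']
    rw [h1]
    ring
  have hexp : ∀ ω, (mhat (s + 1) ω - m (s + 1)) ^ 2
      = β ^ 2 * A ω ^ 2 + α ^ 2 * Z (s + 1) ω ^ 2 + β ^ 2 * K ^ 2
        + 2 * α * β * (A ω * Z (s + 1) ω)
        + (-(2 * β ^ 2 * K)) * A ω + (-(2 * α * β * K)) * Z (s + 1) ω := by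
    intro ω; rw [hdec ω]; ring
  -- integrability of the six pieces
  have iA2 : Integrable (fun ω => A ω ^ 2) μ := by
    have := int_mul2 hAL2 hAL2
    simpa [pow_two] using this
  have iZ2 : Integrable (fun ω => Z (s + 1) ω ^ 2) μ := by
    have := int_mul2 hZt2 hZt2
    simpa [pow_two] using this
  have iAZ : Integrable (fun ω => A ω * Z (s + 1) ω) μ := int_mul2 hAL2 hZt2
  have iZt : Integrable (Z (s + 1)) μ := hZint (s + 1) (by omega) hsN'
  have h1 := iA2.const_mul (β ^ 2)
  have h2 := iZ2.const_mul (α ^ 2)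
  have h3 : Integrable (fun _ : Ω => β ^ 2 * K ^ 2) μ := integrable_const _
  have h4 := iAZ.const_mul (2 * α * β)
  have h5 := hAint.const_mul (-(2 * β ^ 2 * K))
  have h6 := iZt.const_mul (-(2 * α * β * K))
  have hmain : ∫ ω, (mhat (s + 1) ω - m (s + 1)) ^ 2 ∂μ
      = β ^ 2 * (∫ ω, A ω ^ 2 ∂μ) + α ^ 2 * (σ ^ 2 / (2 * θ)) + β ^ 2 * K ^ 2
        + 2 * α * β * (∫ ω, A ω * Z (s + 1) ω ∂μ)
        + (-(2 * β ^ 2 * K)) * (∫ ω, A ω ∂μ) := by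
    have hcg : ∫ ω, (mhat (s + 1) ω - m (s + 1)) ^ 2 ∂μ
        = ∫ ω, (β ^ 2 * A ω ^ 2 + α ^ 2 * Z (s + 1) ω ^ 2 + β ^ 2 * K ^ 2
          + 2 * α * β * (A ω * Z (s + 1) ω)
          + (-(2 * β ^ 2 * K)) * A ω + (-(2 * α * β * K)) * Z (s + 1) ω) ∂μ :=
      integral_congr_ae (Filter.Eventually.of_forall hexp)
    have g12 : Integrable (fun ω => β ^ 2 * A ω ^ 2 + α ^ 2 * Z (s + 1) ω ^ 2) μ :=
      h1.add h2
    have g13 : Integrable (fun ω => β ^ 2 * A ω ^ 2 + α ^ 2 * Z (s + 1) ω ^ 2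
        + β ^ 2 * K ^ 2) μ := g12.add h3
    have g14 : Integrable (fun ω => β ^ 2 * A ω ^ 2 + α ^ 2 * Z (s + 1) ω ^ 2
        + β ^ 2 * K ^ 2 + 2 * α * β * (A ω * Z (s + 1) ω)) μ := g13.add h4
    have g15 : Integrable (fun ω => β ^ 2 * A ω ^ 2 + α ^ 2 * Z (s + 1) ω ^ 2
        + β ^ 2 * K ^ 2 + 2 * α * β * (A ω * Z (s + 1) ω)
        + (-(2 * β ^ 2 * K)) * A ω) μ := g14.add h5
    rw [hcg, integral_add g15 h6,
        integral_add g14 h5,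
        integral_add g13 h4,
        integral_add g12 h3, integral_add h1 h2,
        integral_const_mul, integral_const_mul, integral_const_mul,
        integral_const_mul, integral_const_mul, integral_const_mul, integral_const,
        hvar, hZ0 (s + 1) (by omega) hsN']
    simp only [probReal_univ, ENNReal.toReal_one, one_smul, mul_zero, add_zero]
  rw [hmain, hbias, hcovI]
  -- final algebra
  have hS : ∑ k ∈ Finset.Icc 1 s, β ^ k * γ k
      = β * ∑ j ∈ Finset.Icc 2 s, β ^ (s - j) * γ (s + 1 - j) + β ^ s * γ s := by
    have hh1 : β * ∑ j ∈ Finset.Icc 2 s, β ^ (s - j) * γ (s + 1 - j)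
        = ∑ j ∈ Finset.Icc 2 s, β ^ (s + 1 - j) * γ (s + 1 - j) := by
      rw [Finset.mul_sum]
      refine Finset.sum_congr rfl fun j hj => ?_
      have hj' : j ≤ s := (Finset.mem_Icc.mp hj).2
      rw [show s + 1 - j = (s - j) + 1 by omega, pow_succ]; ring
    have hh2 : ∑ j ∈ Finset.Icc 2 s, β ^ (s + 1 - j) * γ (s + 1 - j)
        = ∑ k ∈ Finset.Icc 1 (s - 1), β ^ k * γ k :=
      reindex_sum (fun k => β ^ k * γ k) s hs1
    have hh3 := Finset.sum_Icc_succ_top (by omega : 1 ≤ (s - 1) + 1)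
      (fun k => β ^ k * γ k)
    rw [Nat.sub_add_cancel hs1] at hh3
    rw [hh1, hh2, hh3]
  rw [hS]
  have hv : β ^ s = β ^ (s - 1) * β := by
    rw [show s = (s - 1) + 1 by omega, pow_succ]
    congr 1
  have hw : β ^ (s + 1) = β ^ (s - 1) * β ^ 2 := by
    rw [show s + 1 = (s - 1) + 2 by omega, pow_add]
  rw [hv, hw, hb']
  ring
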